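/- Suppose Q is an equilibrium queueing profile on a single interval (τₛ, τₑ), n(t) is the (strictly increasing, continuous) equilibrium assignment, and define the gap G(t) = Q(t) − ∫_{τₛ}^{t} β(n(u)) du for t ∈ [τₛ, 0]. Then G ≡ 0 on [τₛ, 0]. -/

import Mathlib

open MeasureTheory intervalIntegral

/-- At equilibrium, the gap function
G(t) = Q(t) − ∫_{τₛ}^t β(n(u)) du vanishes identically on [τₛ, 0]. -/
theorem gap_function_zero
    (N τs : ℝ) (hτs : τs < 0) (hN : 0 < N)
    (β nf Q : ℝ → ℝ)
    (hβc : ContinuousOn β (Set.Icc 0 N))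
    (hβmono : StrictMonoOn β (Set.Icc 0 N))
    (hβmem : ∀ n ∈ Set.Icc (0:ℝ) N, β n ∈ Set.Ioo (0:ℝ) 1)
    (hnfc : ContinuousOn nf (Set.Icc τs 0))
    (hnfmono : StrictMonoOn nf (Set.Icc τs 0))
    (hnfmap : Set.MapsTo nf (Set.Icc τs 0) (Set.Icc 0 N))
    (hQc : ContinuousOn Q (Set.Icc τs 0))
    (hQτs : Q τs = 0)
    (heq : ∀ t ∈ Set.Icc τs 0, ∀ u ∈ Set.Icc τs 0,
      Q t + β (nf t) * (-t) ≤ Q u + β (nf t) * (-u)) :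
    ∀ t ∈ Set.Icc τs 0, Q t - (∫ u in τs..t, β (nf u)) = 0 := by
  set f : ℝ → ℝ := fun u => β (nf u) with hfdef
  have hτsmem : τs ∈ Set.Icc τs 0 := ⟨le_rfl, hτs.le⟩
  have hfc : ContinuousOn f (Set.Icc τs 0) := hβc.comp hnfc hnfmap
  have hfmono : MonotoneOn f (Set.Icc τs 0) := fun a ha b hb hab =>
    hβmono.monotoneOn (hnfmap ha) (hnfmap hb) (hnfmono.monotoneOn ha hb hab)
  have hint : ∀ u ∈ Set.Icc τs 0, ∀ v ∈ Set.Icc τs 0,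
      IntervalIntegrable f volume u v := by
    intro u hu v hv
    exact (hfc.mono (Set.uIcc_subset_Icc hu hv)).intervalIntegrable
  have hQbound : ∀ u ∈ Set.Icc τs 0, ∀ t ∈ Set.Icc τs 0, u ≤ t →
      f u * (t - u) ≤ Q t - Q u ∧ Q t - Q u ≤ f t * (t - u) := by
    intro u hu t ht _
    have h1 := heq t ht u hu
    have h2 := heq u hu t ht
    constructor
    · nlinarith [h2]
    · nlinarith [h1]
  have hIbound : ∀ u ∈ Set.Icc τs 0, ∀ t ∈ Set.Icc τs 0, u ≤ t →
      f u * (t - u) ≤ (∫ s in u..t, f s) ∧ (∫ s in u..t, f s) ≤ f t * (t - u) := by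
    intro u hu t ht hut
    have hsub : Set.Icc u t ⊆ Set.Icc τs 0 := Set.Icc_subset_Icc hu.1 ht.2
    have hi := hint u hu t ht
    constructor
    · have h := intervalIntegral.integral_mono_on hut
        (_root_.intervalIntegrable_const (c := f u)) hi
        (fun s hs => hfmono hu (hsub hs) hs.1)
      simpa [intervalIntegral.integral_const, smul_eq_mul, mul_comm] using h
    · have h := intervalIntegral.integral_mono_on hut hi
        (_root_.intervalIntegrable_const (c := f t))
        (fun s hs => hfmono (hsub hs) ht hs.2)
      simpa [intervalIntegral.integral_const, smul_eq_mul, mul_comm] using h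
  set G : ℝ → ℝ := fun s => Q s - ∫ u in τs..s, f u with hGdef
  have hGτs : G τs = 0 := by simp [hGdef, hQτs]
  have hGdiff : ∀ u ∈ Set.Icc τs 0, ∀ t ∈ Set.Icc τs 0, u ≤ t →
      |G t - G u| ≤ (f t - f u) * (t - u) := by
    intro u hu t ht hut
    have hadj : (∫ s in τs..u, f s) + (∫ s in u..t, f s) = ∫ s in τs..t, f s :=
      intervalIntegral.integral_add_adjacent_intervals (hint τs hτsmem u hu)
        (hint u hu t ht)
    have hq := hQbound u hu t ht hut
    have hi := hIbound u hu t ht hut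
    have hGeq : G t - G u = (Q t - Q u) - ∫ s in u..t, f s := by
      simp only [hGdef]
      linarith [hadj]
    rw [hGeq, abs_le]
    constructor <;> [linarith [hq.1, hi.2]; linarith [hq.2, hi.1]]
  intro t ht
  have hGt0 : G t = 0 := by
    rcases eq_or_lt_of_le ht.1 with rfl | hlt
    · exact hGτs
    · have hL : (0:ℝ) < t - τs := sub_pos.2 hlt
      have key : ∀ n : ℕ, 0 < n → |G t| ≤ (f t - f τs) * (t - τs) / n := by
        intro n hn
        have hnR : (0:ℝ) < n := Nat.cast_pos.2 hn
        set δ : ℝ := (t - τs) / n with hδdef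
        have hδpos : 0 < δ := div_pos hL hnR
        set p : ℕ → ℝ := fun i => τs + i * δ with hpdef
        have hp0 : p 0 = τs := by simp [hpdef]
        have hpn : p n = t := by
          simp only [hpdef, hδdef]
          field_simp
          ring
        have hpmem : ∀ i ≤ n, p i ∈ Set.Icc τs 0 := by
          intro i hi
          have hi' : (i:ℝ) ≤ n := Nat.cast_le.2 hi
          have h1 : τs ≤ p i := by
            have : (0:ℝ) ≤ (i:ℝ) * δ := mul_nonneg (Nat.cast_nonneg i) hδpos.le
            simp only [hpdef]; linarith
          have h2 : p i ≤ p n := by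
            simp only [hpdef]
            have : (i:ℝ) * δ ≤ (n:ℝ) * δ := mul_le_mul_of_nonneg_right hi' hδpos.le
            linarith
          rw [hpn] at h2
          exact ⟨h1, h2.trans ht.2⟩
        have hstep : ∀ i ∈ Finset.range n,
            |G (p (i+1)) - G (p i)| ≤ (f (p (i+1)) - f (p i)) * δ := by
          intro i hi
          rw [Finset.mem_range] at hi
          have h1 := hpmem i hi.le
          have h2 := hpmem (i+1) hi
          have hle : p i ≤ p (i+1) := by
            simp only [hpdef, Nat.cast_add, Nat.cast_one]
            nlinarith
          have h := hGdiff (p i) h1 (p (i+1)) h2 hle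
          have hdiff : p (i+1) - p i = δ := by
            simp only [hpdef, Nat.cast_add, Nat.cast_one]; ring
          rwa [hdiff] at h
        calc |G t| = |∑ i ∈ Finset.range n, (G (p (i+1)) - G (p i))| := by
              rw [Finset.sum_range_sub (fun i => G (p i)), hp0, hpn, hGτs, sub_zero]
          _ ≤ ∑ i ∈ Finset.range n, |G (p (i+1)) - G (p i)| :=
              Finset.abs_sum_le_sum_abs _ _
          _ ≤ ∑ i ∈ Finset.range n, (f (p (i+1)) - f (p i)) * δ :=
              Finset.sum_le_sum hstep
          _ = (f (p n) - f (p 0)) * δ := by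
              rw [← Finset.sum_mul, Finset.sum_range_sub (fun i => f (p i))]
          _ = (f t - f τs) * (t - τs) / n := by
              rw [hp0, hpn, hδdef]; ring
      have htend : Filter.Tendsto (fun n : ℕ => (f t - f τs) * (t - τs) / n)
          Filter.atTop (nhds 0) :=
        tendsto_const_div_atTop_nhds_zero_nat _
      have hle0 : |G t| ≤ 0 := by
        refine ge_of_tendsto htend ?_
        filter_upwards [Filter.eventually_gt_atTop 0] with n hn
        exact key n hn
      exact abs_eq_zero.1 (le_antisymm hle0 (abs_nonneg _))
  simpa [hGdef] using hGt0
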